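/- Let J and J' be finite sets, φ : J → J and ψ : J' → J' maps, and a : J → J' a surjection satisfying a∘φ = ψ∘a. If the restriction of a to gim(φ) is injective, then φ and ψ are shift equivalent. -/
import Mathlib


/-- Self-maps `φ : J → J` and `ψ : J' → J'` are *shift equivalent* if there exist maps
`a : J → J'` and `b : J' → J` and an integer `m ≥ 0` such that `a ∘ φ = ψ ∘ a`,
`b ∘ ψ = φ ∘ b`, `b ∘ a = φ^[m]` and `a ∘ b = ψ^[m]`. -/
def FunShiftEquiv {J J' : Type*} (φ : J → J) (ψ : J' → J') : Prop :=
  ∃ (a : J → J') (b : J' → J) (m : ℕ),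
    a ∘ φ = ψ ∘ a ∧ b ∘ ψ = φ ∘ b ∧ b ∘ a = φ^[m] ∧ a ∘ b = ψ^[m]

/-- The generalized image `gim(φ) = ⋂ₙ φⁿ(J)`, the largest subset of `J` invariant under `φ`. -/
def gimSet {J : Type*} (φ : J → J) : Set J :=
  ⋂ n : ℕ, Set.range φ^[n]

theorem mapsTo_gimSet {J : Type*} (φ : J → J) : Set.MapsTo φ (gimSet φ) (gimSet φ) := by
  intro x hx
  simp only [gimSet, Set.mem_iInter] at hx ⊢
  intro n
  obtain ⟨y, hy⟩ := hx n
  exact ⟨φ y, by rw [← Function.iterate_succ_apply, Function.iterate_succ_apply', hy]⟩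

/-- The *induced permutation* of `φ`: the restriction of `φ` to `gim(φ)`, regarded as a
self-map of `gim(φ)`. -/
def inducedPerm {J : Type*} (φ : J → J) : gimSet φ → gimSet φ :=
  Set.MapsTo.restrict φ _ _ (mapsTo_gimSet φ)

lemma gimSet_eq_range_iterate {J : Type*} [Finite J] (φ : J → J) :
    ∃ N : ℕ, ∀ n, N ≤ n → gimSet φ = Set.range φ^[n] := by
  have hanti : ∀ {m n : ℕ}, m ≤ n → Set.range φ^[n] ⊆ Set.range φ^[m] := by
    intro m n h
    obtain ⟨k, rfl⟩ := Nat.exists_eq_add_of_le h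
    rw [Function.iterate_add]
    exact Set.range_comp_subset_range _ _
  set f : ℕ → ℕ := fun n => (Set.range φ^[n]).ncard with hf
  obtain ⟨N, hN⟩ : sInf (Set.range f) ∈ Set.range f := Nat.sInf_mem ⟨f 0, 0, rfl⟩
  have hstab : ∀ n, N ≤ n → Set.range φ^[n] = Set.range φ^[N] := by
    intro n hn
    refine Set.eq_of_subset_of_ncard_le (hanti hn) ?_ (Set.toFinite _)
    calc (Set.range φ^[N]).ncard = sInf (Set.range f) := hN
      _ ≤ f n := Nat.sInf_le ⟨n, rfl⟩
  refine ⟨N, fun n hn => ?_⟩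
  ext x
  simp only [gimSet, Set.mem_iInter]
  constructor
  · intro h; exact h n
  · intro h k
    rcases le_total k n with hk | hk
    · exact hanti hk h
    · rcases le_total N k with hNk | hNk
      · rw [hstab k hNk, ← hstab n hn]; exact h
      · exact hanti (hNk.trans hn) h

/-- If `a : J → J'` is a surjection with `a ∘ φ = ψ ∘ a` which is injective on `gim(φ)`,
then the finite maps `φ` and `ψ` are shift equivalent. -/
theorem funShiftEquiv_of_semiconj {J J' : Type*} [Finite J] [Finite J']
    (φ : J → J) (ψ : J' → J') (a : J → J')
    (hsurj : Function.Surjective a) (hsemi : a ∘ φ = ψ ∘ a)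
    (hinj : Set.InjOn a (gimSet φ)) :
    FunShiftEquiv φ ψ := by
  classical
  have hsc : Function.Semiconj a φ ψ := fun x => congrFun hsemi x
  have hscn : ∀ n x, a (φ^[n] x) = ψ^[n] (a x) := fun n x => (hsc.iterate_right n) x
  obtain ⟨N₁, h₁⟩ := gimSet_eq_range_iterate φ
  obtain ⟨N₂, h₂⟩ := gimSet_eq_range_iterate ψ
  set m := max N₁ N₂ with hm
  have hφm : gimSet φ = Set.range φ^[m] := h₁ m (le_max_left _ _)
  have hψm : gimSet ψ = Set.range ψ^[m] := h₂ m (le_max_right _ _)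
  have himg : ∀ y : J', ∃ x, x ∈ gimSet φ ∧ a x = ψ^[m] y := by
    intro y
    obtain ⟨z, hz⟩ := hsurj y
    exact ⟨φ^[m] z, by rw [hφm]; exact ⟨z, rfl⟩, by rw [hscn m z, hz]⟩
  choose b hb hab using himg
  refine ⟨a, b, m, hsemi, ?_, ?_, funext hab⟩
  · funext y
    have h1 : b (ψ y) ∈ gimSet φ := hb _
    have h2 : φ (b y) ∈ gimSet φ := mapsTo_gimSet φ (hb y)
    refine hinj h1 h2 ?_
    show a (b (ψ y)) = a (φ (b y))
    rw [hab, hsc (b y), hab, ← Function.iterate_succ_apply ψ m y,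
      Function.iterate_succ_apply' ψ m y]
  · funext x
    have h1 : b (a x) ∈ gimSet φ := hb _
    have h2 : φ^[m] x ∈ gimSet φ := by rw [hφm]; exact ⟨x, rfl⟩
    refine hinj h1 h2 ?_
    show a (b (a x)) = a (φ^[m] x)
    rw [hab, hscn]
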